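/- Let K, H be finite-dimensional complex Hilbert spaces and φ : B(K) → B(H) an extremal element of the cone of positive linear maps. If φ is completely positive, then there exists A ∈ B(K,H) such that φ(X) = A X A* for all X ∈ B(K). -/

import Mathlib

open Matrix ComplexOrder

/-- A linear map between matrix algebras is positive if it maps positive
semidefinite matrices to positive semidefinite matrices. -/
def PosMap {n m : ℕ} (φ : Matrix (Fin n) (Fin n) ℂ →ₗ[ℂ] Matrix (Fin m) (Fin m) ℂ) : Prop :=
  ∀ X : Matrix (Fin n) (Fin n) ℂ, X.PosSemidef → (φ X).PosSemidef

/-- `P` is a one-dimensional orthogonal projection. -/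
def IsProj1 {n : ℕ} (P : Matrix (Fin n) (Fin n) ℂ) : Prop :=
  P.IsHermitian ∧ P * P = P ∧ P.rank = 1

/-- The ampliation `id ⊗ φ` applied blockwise to a `k × k` block matrix. -/
def amp {n m : ℕ} (k : ℕ) (φ : Matrix (Fin n) (Fin n) ℂ →ₗ[ℂ] Matrix (Fin m) (Fin m) ℂ)
    (M : Matrix (Fin k × Fin n) (Fin k × Fin n) ℂ) : Matrix (Fin k × Fin m) (Fin k × Fin m) ℂ :=
  Matrix.of fun p q => φ (Matrix.of fun a b => M (p.1, a) (q.1, b)) p.2 q.2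

/-- Complete positivity: all ampliations preserve positive semidefiniteness. -/
def CompletelyPositive {n m : ℕ}
    (φ : Matrix (Fin n) (Fin n) ℂ →ₗ[ℂ] Matrix (Fin m) (Fin m) ℂ) : Prop :=
  ∀ (k : ℕ) (M : Matrix (Fin k × Fin n) (Fin k × Fin n) ℂ),
    M.PosSemidef → (amp k φ M).PosSemidef

/-- Complete copositivity: `X ↦ φ(Xᵀ)` is completely positive. -/
def CompletelyCopositive {n m : ℕ}
    (φ : Matrix (Fin n) (Fin n) ℂ →ₗ[ℂ] Matrix (Fin m) (Fin m) ℂ) : Prop :=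
  ∀ (k : ℕ) (M : Matrix (Fin k × Fin n) (Fin k × Fin n) ℂ), M.PosSemidef →
    (Matrix.of fun p q : Fin k × Fin m =>
      φ (Matrix.of fun a b => M (p.1, b) (q.1, a)) p.2 q.2).PosSemidef

/-- `φ` is extremal in the cone of positive maps. -/
def IsExtremalPos {n m : ℕ}
    (φ : Matrix (Fin n) (Fin n) ℂ →ₗ[ℂ] Matrix (Fin m) (Fin m) ℂ) : Prop :=
  PosMap φ ∧ ∀ ψ, PosMap ψ → PosMap (φ - ψ) → ∃ l : ℝ, 0 ≤ l ∧ ψ = (l : ℂ) • φ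

/-- `φ` is decomposable: a sum of a completely positive and a completely
copositive map. -/
def Decomposable {n m : ℕ}
    (φ : Matrix (Fin n) (Fin n) ℂ →ₗ[ℂ] Matrix (Fin m) (Fin m) ℂ) : Prop :=
  ∃ φ₁ φ₂, CompletelyPositive φ₁ ∧ CompletelyCopositive φ₂ ∧ φ = φ₁ + φ₂

noncomputable def conjMap {n m : ℕ} (A : Matrix (Fin m) (Fin n) ℂ) :
    Matrix (Fin n) (Fin n) ℂ →ₗ[ℂ] Matrix (Fin m) (Fin m) ℂ where
  toFun X := A * X * Aᴴ
  map_add' X Y := by rw [Matrix.mul_add, Matrix.add_mul]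
  map_smul' c X := by rw [Matrix.mul_smul, Matrix.smul_mul]; rfl

lemma conjMap_apply {n m : ℕ} (A : Matrix (Fin m) (Fin n) ℂ) (X) :
    conjMap A X = A * X * Aᴴ := rfl

lemma psd_sum {ι : Type*} (s : Finset ι) {k : ℕ} (f : ι → Matrix (Fin k) (Fin k) ℂ)
    (h : ∀ i ∈ s, (f i).PosSemidef) : (∑ i ∈ s, f i).PosSemidef := by
  classical
  induction s using Finset.induction with
  | empty => simpa using Matrix.PosSemidef.zero
  | insert _ _ hni ih =>
    rw [Finset.sum_insert hni]
    exact (h _ (Finset.mem_insert_self _ _)).add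
      (ih fun i hi => h i (Finset.mem_insert_of_mem hi))

open scoped MatrixOrder Matrix.Norms.L2Operator in
lemma psd_exists_conjTranspose_mul_self {k : Type*} [Fintype k] [DecidableEq k]
    {C : Matrix k k ℂ} (hC : C.PosSemidef) : ∃ B : Matrix k k ℂ, C = Bᴴ * B := by
  obtain ⟨B, hB⟩ := CStarAlgebra.nonneg_iff_eq_star_mul_self.mp hC.nonneg
  exact ⟨B, hB⟩

/-- Choi's theorem: a completely positive map admits a Kraus decomposition. -/
lemma choi_kraus {n m : ℕ} (φ : Matrix (Fin n) (Fin n) ℂ →ₗ[ℂ] Matrix (Fin m) (Fin m) ℂ)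
    (hcp : CompletelyPositive φ) :
    ∃ A : Fin n × Fin m → Matrix (Fin m) (Fin n) ℂ,
      ∀ X, φ X = ∑ r, A r * X * (A r)ᴴ := by
  classical
  set v : Fin n × Fin n → ℂ := fun p => if p.1 = p.2 then 1 else 0 with hv
  set M : Matrix (Fin n × Fin n) (Fin n × Fin n) ℂ :=
    Matrix.of fun p q => v p * star (v q) with hMdef
  have hMpsd : M.PosSemidef := by
    have : M = (Matrix.replicateCol (Fin 1) v) * (Matrix.replicateCol (Fin 1) v)ᴴ := by
      ext p q
      simp [hMdef, Matrix.mul_apply, Matrix.replicateCol_apply]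
    rw [this]
    exact posSemidef_self_mul_conjTranspose _
  set C := amp n φ M with hCdef
  have hC : C.PosSemidef := hcp n M hMpsd
  obtain ⟨B, hB⟩ := psd_exists_conjTranspose_mul_self hC
  refine ⟨fun r => Matrix.of fun p i => star (B r (i, p)), fun X => ?_⟩
  have hE : ∀ i j : Fin n, φ (Matrix.single i j 1) =
      Matrix.of fun p q => C (i, p) (j, q) := by
    intro i j
    have h1 : (Matrix.of fun a b => M (i, a) (j, b)) = Matrix.single i j (1 : ℂ) := by
      ext a b
      by_cases hia : i = a <;> by_cases hjb : j = b <;>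
        simp [hMdef, hv, Matrix.single, hia, hjb]
    ext p q
    rw [hCdef]
    show φ (Matrix.single i j 1) p q = φ (Matrix.of fun a b => M (i, a) (j, b)) p q
    rw [h1]
  ext p q
  have hX : φ X = ∑ i : Fin n, ∑ j : Fin n, X i j • φ (Matrix.single i j 1) := by
    conv_lhs => rw [matrix_eq_sum_single X]
    rw [map_sum]
    refine Finset.sum_congr rfl fun i _ => ?_
    rw [map_sum]
    refine Finset.sum_congr rfl fun j _ => ?_
    rw [show Matrix.single i j (X i j) = X i j • Matrix.single i j 1 by
      rw [smul_single, smul_eq_mul, mul_one], _root_.map_smul]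
  have key : ∀ r : Fin n × Fin m,
      ((Matrix.of fun p i => star (B r (i, p))) * X *
        (Matrix.of fun p i => star (B r (i, p)))ᴴ) p q
        = ∑ i, ∑ j, X i j * (star (B r (i, p)) * B r (j, q)) := by
    intro r
    simp only [Matrix.mul_apply, Matrix.conjTranspose_apply, Matrix.of_apply, star_star,
      Finset.sum_mul]
    rw [Finset.sum_comm]
    refine Finset.sum_congr rfl fun i _ => ?_
    refine Finset.sum_congr rfl fun j _ => ?_
    ring
  rw [hX]
  have hBC : ∀ (i j : Fin n), C (i, p) (j, q)
      = ∑ r : Fin n × Fin m, star (B r (i, p)) * B r (j, q) := by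
    intro i j
    rw [hB]
    simp [Matrix.mul_apply, Matrix.conjTranspose_apply]
  simp only [Matrix.sum_apply, Matrix.smul_apply, hE, Matrix.of_apply, smul_eq_mul, hBC, key]
  conv_rhs => rw [Finset.sum_comm]
  refine Finset.sum_congr rfl fun i _ => ?_
  conv_rhs => rw [Finset.sum_comm]
  refine Finset.sum_congr rfl fun j _ => ?_
  rw [Finset.mul_sum]

theorem stmt10 {n m : ℕ}
    (φ : Matrix (Fin n) (Fin n) ℂ →ₗ[ℂ] Matrix (Fin m) (Fin m) ℂ)
    (hext : IsExtremalPos φ) (hcp : CompletelyPositive φ) :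
    ∃ A : Matrix (Fin m) (Fin n) ℂ, ∀ X, φ X = A * X * Aᴴ := by
  classical
  obtain ⟨A, hA⟩ := choi_kraus φ hcp
  have hψpos : ∀ r, PosMap (conjMap (A r)) := fun r X hX => by
    rw [conjMap_apply]; exact hX.mul_mul_conjTranspose_same _
  have hdiff : ∀ r, PosMap (φ - conjMap (A r)) := by
    intro r X hX
    have hsplit : (φ - conjMap (A r)) X = ∑ s ∈ Finset.univ.erase r, A s * X * (A s)ᴴ := by
      have h2 := Finset.add_sum_erase Finset.univ (fun s => A s * X * (A s)ᴴ)
        (Finset.mem_univ r)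
      simp only [LinearMap.sub_apply, conjMap_apply, hA X]
      rw [← h2, add_sub_cancel_left]
    rw [hsplit]
    exact psd_sum _ _ fun s _ => hX.mul_mul_conjTranspose_same _
  choose l hl0 hlφ using fun r => hext.2 (conjMap (A r)) (hψpos r) (hdiff r)
  by_cases hall : ∀ r, l r = 0
  · refine ⟨0, fun X => ?_⟩
    have h0 : ∀ r, A r * X * (A r)ᴴ = 0 := by
      intro r
      have h1 := congrArg (fun f => f X) (hlφ r)
      simpa [conjMap_apply, hall r] using h1
    simp [hA X, h0]
  · push_neg at hall
    obtain ⟨r, hr⟩ := hall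
    have hlr : 0 < l r := lt_of_le_of_ne (hl0 r) (Ne.symm hr)
    set c : ℂ := ((Real.sqrt (l r) : ℝ) : ℂ)⁻¹ with hc
    refine ⟨c • A r, fun X => ?_⟩
    have h1 : A r * X * (A r)ᴴ = (l r : ℂ) • φ X := by
      have h2 := congrArg (fun f => f X) (hlφ r)
      simpa [conjMap_apply] using h2
    have hstar : star c = c := by
      rw [hc, ← Complex.ofReal_inv]
      exact Complex.conj_ofReal _
    have hsqrt : ((Real.sqrt (l r) : ℝ) : ℂ) ≠ 0 := by
      simpa using (Real.sqrt_pos.mpr hlr).ne'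
    have hmul : c * c * (l r : ℂ) = 1 := by
      have h3 : ((Real.sqrt (l r) : ℝ) : ℂ) * ((Real.sqrt (l r) : ℝ) : ℂ) = (l r : ℂ) := by
        rw [← Complex.ofReal_mul, Real.mul_self_sqrt (hl0 r)]
      rw [hc]
      field_simp
      rw [sq]; exact h3.symm
    rw [Matrix.conjTranspose_smul, Matrix.smul_mul, Matrix.mul_smul, Matrix.smul_mul, h1, hstar,
      smul_smul, smul_smul]
    rw [hmul, one_smul]
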